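/- arXiv:1003.0916 — 2 statements merged into one kernel-verified Lean document; each statement's English description precedes it below -/
import Mathlib

section
/- For coprime integers 1 < n < m, the coefficient of a^0 (the constant term in a) in the rescaled HOMFLY polynomial P_s(T_{n,m}) equals binom_{q²}(m+n−1, n−1) / [n]_{q²}, as an identity in ℚ(q). -/
/-!
Work in the field ℚ(q) of rational functions in one variable `q` over ℚ.
`qNum x j` is the q-integer `[j]_x = (1 - x^j)/(1 - x)`, `qFact x j` the q-factorial,
`qBinom x n k` the Gaussian binomial coefficient (all with base `x`, so that base `q^2`
gives the `q²`-analogues).  `Ps n m` is the rescaled HOMFLY polynomial of the `(n,m)`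
torus knot, a polynomial in the variable `a` (= `Polynomial.X`) over ℚ(q), given by
Jones' formula.
-/

noncomputable def q : RatFunc ℚ := RatFunc.X

noncomputable def qNum (x : RatFunc ℚ) (j : ℕ) : RatFunc ℚ := (1 - x ^ j) / (1 - x)

noncomputable def qFact (x : RatFunc ℚ) (j : ℕ) : RatFunc ℚ :=
  ∏ i ∈ Finset.range j, qNum x (i + 1)

noncomputable def qBinom (x : RatFunc ℚ) (n k : ℕ) : RatFunc ℚ :=
  qFact x n / (qFact x k * qFact x (n - k))

/-- Jones' formula for the rescaled HOMFLY polynomial of the `(n,m)` torus knot,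
as a polynomial in `a` (= `Polynomial.X`) over `ℚ(q)`. -/
noncomputable def Ps (n m : ℕ) : Polynomial (RatFunc ℚ) :=
  Polynomial.C ((1 - q ^ 2) / (1 - q ^ (2 * n))) *
    ∑ b ∈ Finset.range n,
      Polynomial.C (q ^ (2 * m * b)) *
        (∏ i ∈ Finset.range (n - 1 - b),
          Polynomial.C ((q ^ (2 * (i + 1)) - 1)⁻¹) *
            (Polynomial.C (q ^ (2 * (i + 1))) * Polynomial.X ^ 2 - 1)) *
        ∏ j ∈ Finset.range b,
          Polynomial.C ((1 - q ^ (2 * (j + 1)))⁻¹) *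
            (Polynomial.X ^ 2 - Polynomial.C (q ^ (2 * (j + 1))))

noncomputable def TT : RatFunc ℚ := q ^ 2

lemma one_sub_TT_pow_ne (i : ℕ) (hi : 0 < i) : (1 : RatFunc ℚ) - TT ^ i ≠ 0 := by
  intro h
  have h1 : TT ^ i = 1 := by linear_combination -h
  have h2 : (Polynomial.X : Polynomial ℚ) ^ (2 * i) = 1 := by
    apply RatFunc.algebraMap_injective ℚ
    simpa [TT, q, RatFunc.algebraMap_X, map_pow, pow_mul] using h1
  have := congrArg Polynomial.natDegree h2
  simp [Polynomial.natDegree_X_pow] at this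
  omega

noncomputable def P (k : ℕ) : RatFunc ℚ := ∏ i ∈ Finset.range k, (1 - TT ^ (i + 1))

lemma P_ne (k : ℕ) : P k ≠ 0 := by
  apply Finset.prod_ne_zero_iff.2
  intro i _
  exact one_sub_TT_pow_ne (i + 1) (Nat.succ_pos i)

noncomputable def gb : ℕ → ℕ → RatFunc ℚ
  | _, 0 => 1
  | 0, _ + 1 => 0
  | n + 1, k + 1 => gb n k + TT ^ (k + 1) * gb n (k + 1)

lemma gb_eq_zero : ∀ n k : ℕ, n < k → gb n k = 0 := by
  intro n
  induction n with
  | zero => intro k hk; match k, hk with | (j+1), _ => rfl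
  | succ n ih =>
      intro k hk
      match k, hk with
      | (j+1), hk =>
        show gb n j + TT ^ (j+1) * gb n (j+1) = 0
        rw [ih j (by omega), ih (j+1) (by omega)]
        ring

lemma P_succ (k : ℕ) : P (k + 1) = P k * (1 - TT ^ (k + 1)) := by
  simp [P, Finset.prod_range_succ]

lemma P_zero : P 0 = 1 := by simp [P]

lemma gb_mul : ∀ n k : ℕ, k ≤ n → gb n k * (P k * P (n - k)) = P n := by
  intro n
  induction n with
  | zero => intro k hk; interval_cases k; simp [gb, P]
  | succ n ih =>
      intro k hk
      match k with
      | 0 => show 1 * (P 0 * P (n+1)) = P (n+1); rw [P_zero]; ring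
      | (j+1) =>
        show (gb n j + TT ^ (j+1) * gb n (j+1)) * (P (j+1) * P (n + 1 - (j+1))) = P (n+1)
        rcases Nat.lt_or_ge j n with hj | hj
        · have hd1 : n - j = (n - (j+1)) + 1 := by omega
          have hd2 : n + 1 - (j+1) = (n - (j+1)) + 1 := by omega
          have h1 := ih j (by omega)
          have h2 := ih (j+1) (by omega)
          have e6 : TT ^ (j+1) * TT ^ ((n - (j+1)) + 1) = TT ^ (n+1) := by
            rw [← pow_add]; congr 1; omega
          rw [hd2, P_succ (n - (j+1)), P_succ j]
          rw [hd1, P_succ (n - (j+1))] at h1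
          rw [P_succ j] at h2
          rw [P_succ n]
          linear_combination (1 - TT ^ (j+1)) * h1 + TT ^ (j+1) * (1 - TT ^ ((n - (j+1)) + 1)) * h2 + (- P n) * e6
        · have hjn : j = n := by omega
          subst hjn
          rw [gb_eq_zero j (j+1) (by omega)]
          have h0 : j + 1 - (j + 1) = 0 := by omega
          rw [h0, P_zero]
          have h1 := ih j le_rfl
          have h0' : j - j = 0 := by omega
          rw [h0', P_zero] at h1
          rw [P_succ j]
          linear_combination (1 - TT ^ (j+1)) * h1

lemma qbt : ∀ (N : ℕ) (x : RatFunc ℚ),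
    ∏ j ∈ Finset.range N, (1 - x * TT ^ j)
      = ∑ b ∈ Finset.range (N + 1), (-1) ^ b * x ^ b * TT ^ Nat.choose b 2 * gb N b := by
  intro N
  induction N with
  | zero => intro x; simp [gb]
  | succ N ih =>
    intro x
    rw [Finset.prod_range_succ']
    have hprod : ∏ j ∈ Finset.range N, (1 - x * TT ^ (j + 1))
        = ∏ j ∈ Finset.range N, (1 - x * TT * TT ^ j) := by
      apply Finset.prod_congr rfl; intro j _; ring
    rw [hprod, ih (x * TT), Finset.sum_range_succ' _ (N + 1)]
    have htel : ∑ b ∈ Finset.range (N + 1),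
        ((-1:RatFunc ℚ) ^ b * (x*TT) ^ b * TT ^ Nat.choose b 2 * gb N b
          - (-1) ^ (b+1) * (x*TT) ^ (b+1) * TT ^ Nat.choose (b+1) 2 * gb N (b+1)) = 1 := by
      rw [Finset.sum_range_sub'
        (fun c => (-1:RatFunc ℚ) ^ c * (x*TT) ^ c * TT ^ Nat.choose c 2 * gb N c) (N+1)]
      simp [gb, gb_eq_zero N (N + 1) (by omega)]
    have hterm : ∀ b ∈ Finset.range (N + 1),
        (-1:RatFunc ℚ) ^ (b+1) * x ^ (b+1) * TT ^ Nat.choose (b+1) 2 * gb (N+1) (b+1)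
          = (-1) ^ b * (x*TT) ^ b * TT ^ Nat.choose b 2 * gb N b * (1 - x * TT ^ 0)
            - ((-1) ^ b * (x*TT) ^ b * TT ^ Nat.choose b 2 * gb N b
              - (-1) ^ (b+1) * (x*TT) ^ (b+1) * TT ^ Nat.choose (b+1) 2 * gb N (b+1)) := by
      intro b _
      have hgb : gb (N+1) (b+1) = gb N b + TT ^ (b+1) * gb N (b+1) := rfl
      have hc : Nat.choose (b+1) 2 = Nat.choose b 2 + b := by
        rw [Nat.choose_succ_succ]
        simp [Nat.choose_one_right]
        omega
      rw [hgb, hc, pow_add]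
      ring
    rw [Finset.sum_congr rfl hterm, Finset.sum_sub_distrib, htel]
    have hgb0 : gb (N+1) 0 = 1 := rfl
    rw [hgb0, ← Finset.sum_mul]
    simp

lemma key (N M : ℕ) :
    ∑ b ∈ Finset.range (N + 1), (-1:RatFunc ℚ) ^ b * TT ^ (M * b + b + Nat.choose b 2) * gb N b
      = ∏ j ∈ Finset.range N, (1 - TT ^ (M + 1 + j)) := by
  have h := qbt N (TT ^ (M + 1))
  have hl : ∏ j ∈ Finset.range N, (1 - TT ^ (M+1) * TT ^ j)
      = ∏ j ∈ Finset.range N, (1 - TT ^ (M + 1 + j)) := by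
    apply Finset.prod_congr rfl; intro j _; rw [← pow_add]
  have hr : ∑ b ∈ Finset.range (N + 1), (-1:RatFunc ℚ) ^ b * (TT ^ (M+1)) ^ b * TT ^ Nat.choose b 2 * gb N b
      = ∑ b ∈ Finset.range (N + 1), (-1:RatFunc ℚ) ^ b * TT ^ (M * b + b + Nat.choose b 2) * gb N b := by
    apply Finset.sum_congr rfl; intro b _
    rw [← pow_mul, mul_assoc ((-1:RatFunc ℚ)^b), ← pow_add]
    congr 2
    ring_nf
  rw [← hl, h, hr]

lemma main_sum (N M : ℕ) :
    ∑ b ∈ Finset.range (N + 1),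
        TT ^ (M * b) * (P (N - b))⁻¹ * ((-1) ^ b * TT ^ (b + Nat.choose b 2) * (P b)⁻¹)
      = P (N + M) / (P N * P M) := by
  rw [eq_div_iff (by exact mul_ne_zero (P_ne N) (P_ne M)), Finset.sum_mul]
  have hterm : ∀ b ∈ Finset.range (N + 1),
      TT ^ (M * b) * (P (N - b))⁻¹ * ((-1:RatFunc ℚ) ^ b * TT ^ (b + Nat.choose b 2) * (P b)⁻¹) * (P N * P M)
        = ((-1) ^ b * TT ^ (M * b + b + Nat.choose b 2) * gb N b) * P M := by
    intro b hb
    have hb' : b ≤ N := by simpa using Nat.lt_succ_iff.mp (Finset.mem_range.mp hb)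
    have hgb := gb_mul N b hb'
    have h1 : (P (N - b))⁻¹ * (P b)⁻¹ * P N = gb N b := by
      rw [← hgb]
      field_simp [P_ne b, P_ne (N - b)]
    rw [pow_add, pow_add, ← h1]
    field_simp
    ring
  rw [Finset.sum_congr rfl hterm, ← Finset.sum_mul, key N M]
  have : P (N + M) = P M * ∏ j ∈ Finset.range N, (1 - TT ^ (M + 1 + j)) := by
    rw [P, show N + M = M + N by ring, Finset.prod_range_add]
    congr 1
    all_goals first
      | rfl
      | (apply Finset.prod_congr rfl; intro j _; congr 2; omega)
  rw [this]
  ring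

lemma qFact_eq (j : ℕ) : qFact TT j = P j / (1 - TT) ^ j := by
  unfold qFact qNum P
  rw [Finset.prod_div_distrib, Finset.prod_const, Finset.card_range]

lemma sum_sj (b : ℕ) : ∑ j ∈ Finset.range b, (j + 1) = b + Nat.choose b 2 := by
  induction b with
  | zero => simp
  | succ b ih => rw [Finset.sum_range_succ, ih, Nat.choose_succ_succ]; simp [Nat.choose_one_right]; omega


/-- For coprime `1 < n < m`, the constant term in `a` of the rescaled HOMFLY polynomial
of the `(n,m)` torus knot equals `binom_{q²}(m+n-1, n-1) / [n]_{q²}`. -/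
theorem coeff_Ps_zero (n m : ℕ) (hn : 1 < n) (hm : n < m) (hco : Nat.Coprime n m) :
    (Ps n m).coeff 0 = qBinom (q ^ 2) (m + n - 1) (n - 1) / qNum (q ^ 2) n := by
  obtain ⟨N, rfl⟩ : ∃ N, n = N + 1 := ⟨n - 1, by omega⟩
  rw [Polynomial.coeff_zero_eq_eval_zero, Ps]
  simp only [Polynomial.eval_mul, Polynomial.eval_C, Polynomial.eval_finset_sum,
    Polynomial.eval_prod, Polynomial.eval_sub, Polynomial.eval_pow, Polynomial.eval_X,
    Polynomial.eval_one, ne_eq, OfNat.ofNat_ne_zero, not_false_iff, zero_pow, mul_zero, zero_sub]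
  have hTT : q ^ 2 = TT := rfl
  have e1 : ∀ k : ℕ, q ^ (2 * k) = TT ^ k := fun k => by rw [pow_mul, hTT]
  have hone : (1 : RatFunc ℚ) - TT ≠ 0 := by
    have := one_sub_TT_pow_ne 1 one_pos
    rwa [pow_one] at this
  have hp1 : ∀ k : ℕ, ∏ i ∈ Finset.range k, ((TT ^ (i+1) - 1)⁻¹ * (-1)) = (P k)⁻¹ := by
    intro k
    rw [P, ← Finset.prod_inv_distrib]
    apply Finset.prod_congr rfl
    intro i _
    rw [show (1 - TT ^ (i+1)) = -(TT ^ (i+1) - 1) by ring, inv_neg]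
    ring
  have hp2 : ∀ b : ℕ, ∏ j ∈ Finset.range b, ((1 - TT ^ (j+1))⁻¹ * (-TT ^ (j+1)))
      = (-1 : RatFunc ℚ) ^ b * TT ^ (b + Nat.choose b 2) * (P b)⁻¹ := by
    intro b
    rw [Finset.prod_mul_distrib, P, ← Finset.prod_inv_distrib]
    have h2 : ∏ j ∈ Finset.range b, (-TT ^ (j+1)) = (-1 : RatFunc ℚ) ^ b * TT ^ (b + Nat.choose b 2) := by
      have : ∀ j : ℕ, (-TT ^ (j+1)) = (-1 : RatFunc ℚ) * TT ^ (j+1) := fun j => by ring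
      rw [Finset.prod_congr rfl (fun j _ => this j), Finset.prod_mul_distrib,
        Finset.prod_const, Finset.card_range, Finset.prod_pow_eq_pow_sum, sum_sj]
    rw [h2]
    ring
  have hbody : ∀ b ∈ Finset.range (N + 1),
      (q ^ (2 * m * b) * ∏ i ∈ Finset.range (N + 1 - 1 - b), ((q ^ (2 * (i+1)) - 1)⁻¹ * -1)) *
          ∏ j ∈ Finset.range b, ((1 - q ^ (2 * (j+1)))⁻¹ * -q ^ (2 * (j+1)))
        = TT ^ (m * b) * (P (N - b))⁻¹ * ((-1) ^ b * TT ^ (b + Nat.choose b 2) * (P b)⁻¹) := by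
    intro b _
    have hs : N + 1 - 1 - b = N - b := by omega
    have hmb : 2 * m * b = 2 * (m * b) := by ring
    rw [hs, hmb, e1]
    rw [show (∏ i ∈ Finset.range (N - b), ((q ^ (2 * (i+1)) - 1)⁻¹ * -1))
        = ∏ i ∈ Finset.range (N - b), ((TT ^ (i+1) - 1)⁻¹ * (-1)) from
      Finset.prod_congr rfl (fun i _ => by rw [e1])]
    rw [show (∏ j ∈ Finset.range b, ((1 - q ^ (2 * (j+1)))⁻¹ * -q ^ (2 * (j+1))))
        = ∏ j ∈ Finset.range b, ((1 - TT ^ (j+1))⁻¹ * (-TT ^ (j+1))) from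
      Finset.prod_congr rfl (fun j _ => by rw [e1])]
    rw [hp1, hp2]
  rw [Finset.sum_congr rfl hbody, main_sum N m]
  have hqb : qBinom TT (m + (N + 1) - 1) (N + 1 - 1) = P (N + m) / (P N * P m) := by
    have h1 : m + (N + 1) - 1 = N + m := by omega
    have h2 : N + 1 - 1 = N := by omega
    rw [h1, h2]
    unfold qBinom
    rw [show N + m - N = m from by omega, qFact_eq, qFact_eq, qFact_eq]
    field_simp [P_ne, hone]
    ring
  rw [hTT, e1 (N + 1), hqb]
  rw [show qNum TT (N + 1) = (1 - TT ^ (N + 1)) / (1 - TT) from rfl]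
  have hn1 : (1 : RatFunc ℚ) - TT ^ (N + 1) ≠ 0 := one_sub_TT_pow_ne (N + 1) (by omega)
  field_simp [P_ne]
end

section
/- For coprime integers 1 < n < m, the following 'blow-up' identities hold in ℚ(q): P_s^0(T_{n,m}) = (−1)^{n−1} · q^{−n(n−1)} · P_s^{n−1}(T_{n,m+n}) and P_s^0(T_{n,m}) = (−1)^{m−1} · q^{−m(m−1)} · P_s^{m−1}(T_{m,m+n}), where P_s^k(T_{n,m}) denotes the coefficient of a^{2k} in P_s(T_{n,m}). -/
open Polynomial Finset

lemma q_ne_zero : q ≠ 0 := RatFunc.X_ne_zero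

lemma q_pow_ne_one {n : ℕ} (hk : n ≠ 0) : q ^ n ≠ 1 := by
  intro h
  have : (Polynomial.X : ℚ[X]) ^ n = 1 := by
    apply RatFunc.algebraMap_injective
    rw [map_pow, map_one, RatFunc.algebraMap_X]
    
    exact h
  have := congrArg Polynomial.natDegree this
  simp [Polynomial.natDegree_X_pow] at this
  exact hk this

lemma one_sub_q_ne {k : ℕ} : (1 : RatFunc ℚ) - q ^ (2 * (k + 1)) ≠ 0 := by
  intro h
  exact q_pow_ne_one (n := 2 * (k + 1)) (by omega) (by linear_combination -h)

noncomputable def f (k : ℕ) : RatFunc ℚ := ∏ i ∈ Finset.range k, (1 - q ^ (2 * (i + 1)))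

lemma f_ne_zero (k : ℕ) : f k ≠ 0 :=
  Finset.prod_ne_zero_iff.mpr fun i _ => one_sub_q_ne

lemma f_succ (k : ℕ) : f (k + 1) = f k * (1 - q ^ (2 * (k + 1))) := Finset.prod_range_succ _ _

lemma f_zero : f 0 = 1 := rfl

lemma pascal_aux {K : Type*} [Field K] (y z F1 F2 : K) (hy : 1 - y ≠ 0) (hz : 1 - z ≠ 0) :
    (1 - y * z) * (F1 * (1 - y)⁻¹ * (F2 * (1 - z)⁻¹)) =
      F1 * (F2 * (1 - z)⁻¹) + y * (F1 * (1 - y)⁻¹ * F2) := by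
  field_simp
  ring

noncomputable def S (N c : ℕ) : RatFunc ℚ :=
  ∑ b ∈ Finset.range (N + 1), (-1) ^ b * q ^ (b * (b + 1) + 2 * c * b) * ((f b)⁻¹ * (f (N - b))⁻¹)

lemma key_s3 (N : ℕ) : ∀ c : ℕ, S N c = (∏ j ∈ Finset.range N, (1 - q ^ (2 * (c + 1 + j)))) * (f N)⁻¹ := by
  induction N with
  | zero => intro c; simp [S, f]
  | succ N ih =>
    intro c
    have hstep : (1 - q ^ (2 * (N + 1))) * S (N + 1) c = (1 - q ^ (2 * (c + 1))) * S N (c + 1) := by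
      have hterm : ∀ b ∈ Finset.range (N + 2),
          (1 - q ^ (2 * (N + 1))) *
            ((-1) ^ b * q ^ (b * (b + 1) + 2 * c * b) * ((f b)⁻¹ * (f (N + 1 - b))⁻¹)) =
          (if b = 0 then 0 else
            (-1) ^ b * q ^ (b * (b + 1) + 2 * c * b) * ((f (b - 1))⁻¹ * (f (N + 1 - b))⁻¹)) +
          (if b = N + 1 then 0 else
            (-1) ^ b * q ^ (b * (b + 1) + 2 * c * b) * q ^ (2 * b) * ((f b)⁻¹ * (f (N - b))⁻¹)) := by
        intro b hb
        rw [Finset.mem_range] at hb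
        rcases Nat.eq_zero_or_pos b with rfl | hb0
        · rw [if_pos rfl, if_neg (by omega), zero_add]
          simp only [Nat.sub_zero, pow_zero, mul_zero, mul_one, one_mul]
          rw [f_succ N, f_zero, mul_inv]
          have h := mul_inv_cancel₀ (one_sub_q_ne (k := N))
          simp only [inv_one, one_mul, mul_one]
          linear_combination (f N)⁻¹ * h
        · obtain ⟨b', rfl⟩ : ∃ b', b = b' + 1 := ⟨b - 1, by omega⟩
          rcases Nat.lt_or_ge b' N with hbN | hbN
          · -- middle case: 1 ≤ b ≤ N
            obtain ⟨k, hk⟩ : ∃ k, N - 1 - b' = k := ⟨_, rfl⟩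
            have hN : N + 1 - (b' + 1) = k + 1 := by omega
            have hNb : N - (b' + 1) = k := by omega
            rw [if_neg (by omega), if_neg (by omega), hN, hNb]
            rw [f_succ b', f_succ k]
            have hq : q ^ (2 * (N + 1)) = q ^ (2 * (b' + 1)) * q ^ (2 * (k + 1)) := by
              rw [← pow_add]; congr 1; omega
            rw [hq, mul_inv, mul_inv]
            have hp := pascal_aux (K := RatFunc ℚ) (q ^ (2 * (b' + 1))) (q ^ (2 * (k + 1)))
              ((f b')⁻¹) ((f k)⁻¹) one_sub_q_ne one_sub_q_ne
            simp only [Nat.add_sub_cancel]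
            calc (1 - q ^ (2 * (b' + 1)) * q ^ (2 * (k + 1))) *
                  ((-1) ^ (b' + 1) * q ^ ((b' + 1) * (b' + 1 + 1) + 2 * c * (b' + 1)) *
                    ((f b')⁻¹ * (1 - q ^ (2 * (b' + 1)))⁻¹ * ((f k)⁻¹ * (1 - q ^ (2 * (k + 1)))⁻¹)))
                = (-1) ^ (b' + 1) * q ^ ((b' + 1) * (b' + 1 + 1) + 2 * c * (b' + 1)) *
                    ((1 - q ^ (2 * (b' + 1)) * q ^ (2 * (k + 1))) *
                      ((f b')⁻¹ * (1 - q ^ (2 * (b' + 1)))⁻¹ * ((f k)⁻¹ * (1 - q ^ (2 * (k + 1)))⁻¹))) := by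
                  ring
              _ = (-1) ^ (b' + 1) * q ^ ((b' + 1) * (b' + 1 + 1) + 2 * c * (b' + 1)) *
                    ((f b')⁻¹ * ((f k)⁻¹ * (1 - q ^ (2 * (k + 1)))⁻¹) +
                      q ^ (2 * (b' + 1)) * ((f b')⁻¹ * (1 - q ^ (2 * (b' + 1)))⁻¹ * (f k)⁻¹)) := by
                  rw [hp]
              _ = _ := by ring
          · -- b = N + 1
            have hbe : b' = N := by omega
            subst hbe
            rw [if_neg (by omega), if_pos rfl, add_zero]
            rw [show b' + 1 - (b' + 1) = 0 from by omega, f_zero, f_succ b', mul_inv]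
            simp only [Nat.add_sub_cancel, inv_one, mul_one]
            have h := mul_inv_cancel₀ (one_sub_q_ne (k := b'))
            linear_combination
              (-1) ^ (b' + 1) * q ^ ((b' + 1) * (b' + 1 + 1) + 2 * c * (b' + 1)) * (f b')⁻¹ * h
      rw [S, Finset.mul_sum, Finset.sum_congr rfl hterm, Finset.sum_add_distrib]
      rw [Finset.sum_range_succ' _ (N + 1), Finset.sum_range_succ
        (fun b => if b = N + 1 then (0:RatFunc ℚ) else
          (-1) ^ b * q ^ (b * (b + 1) + 2 * c * b) * q ^ (2 * b) * ((f b)⁻¹ * (f (N - b))⁻¹)) (N + 1)]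
      simp only [eq_self_iff_true, if_true, Nat.succ_ne_zero, if_false, add_zero, zero_add]
      rw [S, Finset.mul_sum]
      have h1 : ∀ b ∈ Finset.range (N + 1),
          (if b = N + 1 then (0:RatFunc ℚ) else
            (-1) ^ b * q ^ (b * (b + 1) + 2 * c * b) * q ^ (2 * b) * ((f b)⁻¹ * (f (N - b))⁻¹)) =
          (-1) ^ b * q ^ (b * (b + 1) + 2 * (c + 1) * b) * ((f b)⁻¹ * (f (N - b))⁻¹) := by
        intro b hb
        rw [Finset.mem_range] at hb
        rw [if_neg (by omega),
          show b * (b + 1) + 2 * (c + 1) * b = b * (b + 1) + 2 * c * b + 2 * b from by ring, pow_add]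
        ring
      have h2 : ∀ b ∈ Finset.range (N + 1),
          (-1) ^ (b + 1) * q ^ ((b + 1) * (b + 1 + 1) + 2 * c * (b + 1)) *
            ((f (b + 1 - 1))⁻¹ * (f (N + 1 - (b + 1)))⁻¹) =
          (1 - q ^ (2 * (c + 1)) - 1) *
            ((-1) ^ b * q ^ (b * (b + 1) + 2 * (c + 1) * b) * ((f b)⁻¹ * (f (N - b))⁻¹)) := by
        intro b hb
        simp only [Nat.add_sub_cancel]
        rw [show N + 1 - (b + 1) = N - b from by omega]
        rw [show (b + 1) * (b + 1 + 1) + 2 * c * (b + 1) =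
          2 * (c + 1) + (b * (b + 1) + 2 * (c + 1) * b) from by ring, pow_add, pow_succ]
        ring
      rw [Finset.sum_congr rfl h1, Finset.sum_congr rfl h2, ← Finset.mul_sum, ← Finset.mul_sum]
      ring
    have hne : (1 : RatFunc ℚ) - q ^ (2 * (N + 1)) ≠ 0 := one_sub_q_ne
    apply mul_left_cancel₀ hne
    rw [hstep, ih (c + 1), f_succ, mul_inv,
      Finset.prod_range_succ' (fun j => 1 - q ^ (2 * (c + 1 + j))) N]
    have hpr : ∀ j ∈ Finset.range N,
        (1 - q ^ (2 * (c + 1 + (j + 1)))) = (1 - q ^ (2 * (c + 1 + 1 + j))) := by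
      intro j _
      rw [show c + 1 + (j + 1) = c + 1 + 1 + j from by omega]
    rw [Finset.prod_congr rfl hpr]
    simp only [add_zero]
    field_simp

lemma coeff0_eq (n m : ℕ) : (Ps n m).coeff 0 =
    (1 - q ^ 2) / (1 - q ^ (2 * n)) *
      ∑ b ∈ Finset.range n, q ^ (2 * m * b) *
        (∏ i ∈ Finset.range (n - 1 - b), ((q ^ (2 * (i + 1)) - 1)⁻¹ * (-1))) *
        (∏ j ∈ Finset.range b, ((1 - q ^ (2 * (j + 1)))⁻¹ * (-(q ^ (2 * (j + 1)))))) := by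
  rw [Polynomial.coeff_zero_eq_eval_zero]
  simp [Ps, Polynomial.eval_prod, Polynomial.eval_finset_sum]

lemma sum_two_mul (k : ℕ) : ∑ i ∈ Finset.range k, 2 * (i + 1) = k * (k + 1) := by
  induction k with
  | zero => simp
  | succ k ih => rw [Finset.sum_range_succ, ih]; ring

lemma prod_q_pow (k : ℕ) : ∏ i ∈ Finset.range k, q ^ (2 * (i + 1)) = q ^ (k * (k + 1)) := by
  rw [Finset.prod_pow_eq_pow_sum, sum_two_mul]

lemma inv_swap (e : ℕ) : (q ^ e - 1)⁻¹ = -(1 - q ^ e)⁻¹ := by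
  rw [← neg_sub, inv_neg]

lemma prodA (k : ℕ) :
    ∏ i ∈ Finset.range k, ((q ^ (2 * (i + 1)) - 1)⁻¹ * (-1)) = (f k)⁻¹ := by
  have h : ∀ i ∈ Finset.range k,
      (q ^ (2 * (i + 1)) - 1)⁻¹ * (-1) = (1 - q ^ (2 * (i + 1)))⁻¹ := by
    intro i _; rw [inv_swap]; ring
  rw [Finset.prod_congr rfl h, Finset.prod_inv_distrib, f]

lemma prodA' (k : ℕ) :
    ∏ i ∈ Finset.range k, ((q ^ (2 * (i + 1)) - 1)⁻¹ * q ^ (2 * (i + 1))) =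
      (-1) ^ k * q ^ (k * (k + 1)) * (f k)⁻¹ := by
  have h : ∀ i ∈ Finset.range k,
      (q ^ (2 * (i + 1)) - 1)⁻¹ * q ^ (2 * (i + 1)) =
        (-1) * (q ^ (2 * (i + 1)) * (1 - q ^ (2 * (i + 1)))⁻¹) := by
    intro i _; rw [inv_swap]; ring
  rw [Finset.prod_congr rfl h, Finset.prod_mul_distrib, Finset.prod_mul_distrib,
    Finset.prod_const, prod_q_pow, Finset.prod_inv_distrib]
  simp only [f, Finset.card_range]
  ring

lemma prodB (b : ℕ) :
    ∏ j ∈ Finset.range b, ((1 - q ^ (2 * (j + 1)))⁻¹ * (-(q ^ (2 * (j + 1))))) =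
      (-1) ^ b * q ^ (b * (b + 1)) * (f b)⁻¹ := by
  have h : ∀ j ∈ Finset.range b,
      (1 - q ^ (2 * (j + 1)))⁻¹ * (-(q ^ (2 * (j + 1)))) =
        (-1) * (q ^ (2 * (j + 1)) * (1 - q ^ (2 * (j + 1)))⁻¹) := by
    intro j _; ring
  rw [Finset.prod_congr rfl h, Finset.prod_mul_distrib, Finset.prod_mul_distrib,
    Finset.prod_const, prod_q_pow, Finset.prod_inv_distrib]
  simp only [f, Finset.card_range]
  ring

lemma prodC (b : ℕ) :
    ∏ j ∈ Finset.range b, (1 - q ^ (2 * (j + 1)))⁻¹ = (f b)⁻¹ := by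
  rw [Finset.prod_inv_distrib, f]

noncomputable def CF (n m : ℕ) : RatFunc ℚ :=
  (1 - q ^ 2) * f (n + m - 1) * ((f n)⁻¹ * (f m)⁻¹)

lemma coeff0_CF (n m : ℕ) (hn : 1 ≤ n) : (Ps n m).coeff 0 = CF n m := by
  rw [coeff0_eq]
  have hsum : (∑ b ∈ Finset.range n, q ^ (2 * m * b) *
      (∏ i ∈ Finset.range (n - 1 - b), ((q ^ (2 * (i + 1)) - 1)⁻¹ * (-1))) *
      (∏ j ∈ Finset.range b, ((1 - q ^ (2 * (j + 1)))⁻¹ * (-(q ^ (2 * (j + 1))))))) =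
      S (n - 1) m := by
    rw [S, show n - 1 + 1 = n from by omega]
    apply Finset.sum_congr rfl
    intro b hb
    rw [Finset.mem_range] at hb
    rw [prodA, prodB, show b * (b + 1) + 2 * m * b = b * (b + 1) + 2 * m * b from rfl, pow_add]
    ring
  rw [hsum, key_s3 (n - 1) m]
  have hprod : ∏ j ∈ Finset.range (n - 1), (1 - q ^ (2 * (m + 1 + j))) =
      f (n + m - 1) * (f m)⁻¹ := by
    have h1 : f (m + (n - 1)) = f m * ∏ j ∈ Finset.range (n - 1), (1 - q ^ (2 * (m + 1 + j))) := by
      rw [f, Finset.prod_range_add]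
      congr 1
      apply Finset.prod_congr rfl
      intro j _
      rw [show m + j + 1 = m + 1 + j from by omega]
    rw [show n + m - 1 = m + (n - 1) from by omega, h1, mul_comm (f m), mul_assoc,
      mul_inv_cancel₀ (f_ne_zero m), mul_one]
  rw [hprod, CF]
  have hfn : f n = f (n - 1) * (1 - q ^ (2 * n)) := by
    conv_lhs => rw [show n = n - 1 + 1 from by omega]
    rw [f_succ, show 2 * (n - 1 + 1) = 2 * n from by omega]
  rw [hfn, mul_inv, div_eq_mul_inv]
  ring

lemma CF_symm (n m : ℕ) : CF n m = CF m n := by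
  rw [CF, CF, show m + n - 1 = n + m - 1 from by omega]
  ring

lemma coeffTop_eq (n M : ℕ) : (Ps n M).coeff (2 * (n - 1)) =
    (1 - q ^ 2) / (1 - q ^ (2 * n)) *
      ∑ b ∈ Finset.range n, q ^ (2 * M * b) *
        (∏ i ∈ Finset.range (n - 1 - b), ((q ^ (2 * (i + 1)) - 1)⁻¹ * q ^ (2 * (i + 1)))) *
        (∏ j ∈ Finset.range b, (1 - q ^ (2 * (j + 1)))⁻¹) := by
  rw [Ps, Polynomial.coeff_C_mul, Polynomial.finset_sum_coeff]
  congr 1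
  apply Finset.sum_congr rfl
  intro b hb
  rw [Finset.mem_range] at hb
  rw [mul_assoc, Polynomial.coeff_C_mul]
  have hdA : ∀ i ∈ Finset.range (n - 1 - b),
      (Polynomial.C ((q ^ (2 * (i + 1)) - 1)⁻¹) *
        (Polynomial.C (q ^ (2 * (i + 1))) * Polynomial.X ^ 2 - 1)).natDegree ≤ 2 :=
    fun i _ => by compute_degree
  have hdB : ∀ j ∈ Finset.range b,
      (Polynomial.C ((1 - q ^ (2 * (j + 1)))⁻¹) *
        (Polynomial.X ^ 2 - Polynomial.C (q ^ (2 * (j + 1))))).natDegree ≤ 2 :=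
    fun j _ => by compute_degree
  have hAdeg : (∏ i ∈ Finset.range (n - 1 - b),
      Polynomial.C ((q ^ (2 * (i + 1)) - 1)⁻¹) *
        (Polynomial.C (q ^ (2 * (i + 1))) * Polynomial.X ^ 2 - 1)).natDegree ≤ 2 * (n - 1 - b) := by
    refine le_trans (Polynomial.natDegree_prod_le _ _) ?_
    refine le_trans (Finset.sum_le_sum hdA) ?_
    simp [mul_comm]
  have hBdeg : (∏ j ∈ Finset.range b,
      Polynomial.C ((1 - q ^ (2 * (j + 1)))⁻¹) *
        (Polynomial.X ^ 2 - Polynomial.C (q ^ (2 * (j + 1))))).natDegree ≤ 2 * b := by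
    refine le_trans (Polynomial.natDegree_prod_le _ _) ?_
    refine le_trans (Finset.sum_le_sum hdB) ?_
    simp [mul_comm]
  rw [show 2 * (n - 1) = 2 * (n - 1 - b) + 2 * b from by omega,
    Polynomial.coeff_mul_add_eq_of_natDegree_le hAdeg hBdeg]
  have hA : (∏ i ∈ Finset.range (n - 1 - b),
      Polynomial.C ((q ^ (2 * (i + 1)) - 1)⁻¹) *
        (Polynomial.C (q ^ (2 * (i + 1))) * Polynomial.X ^ 2 - 1)).coeff (2 * (n - 1 - b)) =
      ∏ i ∈ Finset.range (n - 1 - b), ((q ^ (2 * (i + 1)) - 1)⁻¹ * q ^ (2 * (i + 1))) := by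
    rw [show 2 * (n - 1 - b) = (Finset.range (n - 1 - b)).card * 2 from by simp [mul_comm],
      Polynomial.coeff_prod_of_natDegree_le _ _ 2 hdA]
    exact Finset.prod_congr rfl fun i _ => by
      simp only [Polynomial.coeff_C_mul, Polynomial.coeff_sub, Polynomial.coeff_one,
        Polynomial.coeff_X_pow, if_pos rfl]
      norm_num
  have hB : (∏ j ∈ Finset.range b,
      Polynomial.C ((1 - q ^ (2 * (j + 1)))⁻¹) *
        (Polynomial.X ^ 2 - Polynomial.C (q ^ (2 * (j + 1))))).coeff (2 * b) =
      ∏ j ∈ Finset.range b, (1 - q ^ (2 * (j + 1)))⁻¹ := by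
    rw [show 2 * b = (Finset.range b).card * 2 from by simp [mul_comm],
      Polynomial.coeff_prod_of_natDegree_le _ _ 2 hdB]
    exact Finset.prod_congr rfl fun j _ => by
      simp only [Polynomial.coeff_C_mul, Polynomial.coeff_sub, Polynomial.coeff_X_pow,
        Polynomial.coeff_C]
      norm_num
  rw [hA, hB]
  ring

lemma main (n m : ℕ) (hn : 1 ≤ n) :
    (Ps n (m + n)).coeff (2 * (n - 1)) =
      (-1) ^ (n - 1) * q ^ (n * (n - 1)) * (Ps n m).coeff 0 := by
  rw [coeffTop_eq, coeff0_eq]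
  have h : ∀ b ∈ Finset.range n,
      q ^ (2 * (m + n) * b) *
        (∏ i ∈ Finset.range (n - 1 - b), ((q ^ (2 * (i + 1)) - 1)⁻¹ * q ^ (2 * (i + 1)))) *
        (∏ j ∈ Finset.range b, (1 - q ^ (2 * (j + 1)))⁻¹) =
      (-1) ^ (n - 1) * q ^ (n * (n - 1)) *
        (q ^ (2 * m * b) *
          (∏ i ∈ Finset.range (n - 1 - b), ((q ^ (2 * (i + 1)) - 1)⁻¹ * (-1))) *
          (∏ j ∈ Finset.range b, ((1 - q ^ (2 * (j + 1)))⁻¹ * (-(q ^ (2 * (j + 1))))))) := by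
    intro b hb
    rw [Finset.mem_range] at hb
    rw [prodA', prodA, prodB, prodC]
    obtain ⟨k, hk⟩ : ∃ k, k = n - 1 - b := ⟨_, rfl⟩
    rw [← hk]
    have hn' : n = b + k + 1 := by omega
    rw [hn', show b + k + 1 - 1 = b + k from by omega]
    have h2 : ((-1 : RatFunc ℚ)) ^ b * (-1) ^ b = 1 := by
      rw [← pow_add, ← two_mul, pow_mul]
      norm_num
    linear_combination (-(q ^ (2 * (m + (b + k + 1)) * b + k * (k + 1)) * (-1 : RatFunc ℚ) ^ k *
      ((f k)⁻¹ * (f b)⁻¹))) * h2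
  rw [Finset.sum_congr rfl h, ← Finset.mul_sum]
  ring

lemma half (n m : ℕ) (hn : 1 ≤ n) :
    (Ps n m).coeff 0 =
      (-1) ^ (n - 1) * q ^ (-((n : ℤ) * ((n : ℤ) - 1))) *
        (Ps n (m + n)).coeff (2 * (n - 1)) := by
  rw [main n m hn]
  have hz : (q : RatFunc ℚ) ^ (-((n : ℤ) * ((n : ℤ) - 1))) = (q ^ (n * (n - 1)))⁻¹ := by
    rw [zpow_neg]
    congr 1
    rw [show ((n : ℤ) * ((n : ℤ) - 1)) = ((n * (n - 1) : ℕ) : ℤ) from by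
      rw [Nat.cast_mul, Nat.cast_sub hn, Nat.cast_one], zpow_natCast]
  rw [hz]
  have h1 : (-1 : RatFunc ℚ) ^ (n - 1) * (-1) ^ (n - 1) = 1 := by
    rw [← pow_add, ← two_mul, pow_mul]
    norm_num
  have h2 : ((q : RatFunc ℚ) ^ (n * (n - 1)))⁻¹ * q ^ (n * (n - 1)) = 1 :=
    inv_mul_cancel₀ (pow_ne_zero _ q_ne_zero)
  calc (Ps n m).coeff 0
      = ((-1 : RatFunc ℚ) ^ (n - 1) * (-1) ^ (n - 1)) *
          (((q : RatFunc ℚ) ^ (n * (n - 1)))⁻¹ * q ^ (n * (n - 1))) * (Ps n m).coeff 0 := by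
        rw [h1, h2, one_mul, one_mul]
    _ = (-1) ^ (n - 1) * (q ^ (n * (n - 1)))⁻¹ *
          ((-1) ^ (n - 1) * q ^ (n * (n - 1)) * (Ps n m).coeff 0) := by ring


/-- The "blow-up" identities: for coprime `1 < n < m`,
`P_s^0(T_{n,m}) = (-1)^{n-1} q^{-n(n-1)} P_s^{n-1}(T_{n,m+n})`
and `P_s^0(T_{n,m}) = (-1)^{m-1} q^{-m(m-1)} P_s^{m-1}(T_{m,m+n})`,
where `P_s^k` is the coefficient of `a^{2k}`. -/
theorem blowup (n m : ℕ) (hn : 1 < n) (hm : n < m) (hco : Nat.Coprime n m) :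
    (Ps n m).coeff 0 =
        (-1) ^ (n - 1) * q ^ (-((n : ℤ) * ((n : ℤ) - 1))) *
          (Ps n (m + n)).coeff (2 * (n - 1)) ∧
      (Ps n m).coeff 0 =
        (-1) ^ (m - 1) * q ^ (-((m : ℤ) * ((m : ℤ) - 1))) *
          (Ps m (m + n)).coeff (2 * (m - 1)) := by
  constructor
  · exact half n m (by omega)
  · rw [show (Ps n m).coeff 0 = (Ps m n).coeff 0 from by
      rw [coeff0_CF n m (by omega), coeff0_CF m n (by omega), CF_symm],
      show m + n = n + m from Nat.add_comm m n]
    exact half m n (by omega)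
end
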